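/- arXiv:1909.11580 — 2 statements merged into one kernel-verified Lean document; each statement's English description precedes it below -/
import Mathlib

section
/- (Step 1 of the Haar basis construction.) Let {ψ_ℓ}_{ℓ=1}^{|C|} be any orthonormal basis of ℓ²(C). Then the combined family {T ψ_ℓ : 1 ≤ ℓ ≤ |C|} ∪ {η_{c,k} : c ∈ C, 2 ≤ k ≤ k_c} is an orthonormal basis of ℓ²(V). -/
/-- The size `k_c` of the fiber (cluster) of `c` under the parent map `p : V → C`. -/
def fiberCard {V C : Type*} [Fintype V] [DecidableEq C] (p : V → C) (c : C) : ℕ :=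
  (Finset.univ.filter fun v => p v = c).card

/-- The lifting map `T : (C → ℝ) → (V → ℝ)`, `(Tg)(v) = g(p(v)) / √(k_{p(v)})`. -/
noncomputable def lift {V C : Type*} [Fintype V] [DecidableEq C] (p : V → C) (g : C → ℝ) :
    V → ℝ :=
  fun v => g (p v) / Real.sqrt (fiberCard p (p v))

/-- `χ_{c,j}` (1-indexed `j`): the indicator function on `V` of the `j`-th vertex
`v_{c,j} = e c (j-1)` of the fixed enumeration `e c` of the fiber of `c`. -/
def chi {V C : Type*} [Fintype V] [DecidableEq V] [DecidableEq C] (p : V → C)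
    (e : ∀ c : C, Fin (fiberCard p c) → V) (c : C) (j : ℕ) : V → ℝ :=
  fun v => if hj : j - 1 < fiberCard p c then (if v = e c ⟨j - 1, hj⟩ then 1 else 0) else 0

/-- The within-cluster Haar vector `η_{c,k}` (for `2 ≤ k ≤ k_c`):
`η_{c,k} = √((k_c-k+1)/(k_c-k+2)) · (χ_{c,k-1} - (1/(k_c-k+1)) ∑_{j=k}^{k_c} χ_{c,j})`. -/
noncomputable def eta {V C : Type*} [Fintype V] [DecidableEq V] [DecidableEq C] (p : V → C)
    (e : ∀ c : C, Fin (fiberCard p c) → V) (c : C) (k : ℕ) : V → ℝ :=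
  fun v =>
    Real.sqrt (((fiberCard p c : ℝ) - k + 1) / ((fiberCard p c : ℝ) - k + 2)) *
      (chi p e c (k - 1) v -
        (1 / ((fiberCard p c : ℝ) - k + 1)) *
          ∑ j ∈ Finset.Icc k (fiberCard p c), chi p e c j v)

section Aux

variable {V C : Type*} [Fintype V] [Fintype C] [DecidableEq V] [DecidableEq C]
  (p : V → C) (e : ∀ c : C, Fin (fiberCard p c) → V)

lemma fiber_eq_image (he₁ : ∀ c, Function.Injective (e c)) (he₂ : ∀ c i, p (e c i) = c) (c : C) :
    Finset.univ.filter (fun v => p v = c) = Finset.image (e c) Finset.univ := by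
  symm
  apply Finset.eq_of_subset_of_card_le
  · intro v hv
    simp only [Finset.mem_image, Finset.mem_univ, true_and] at hv
    obtain ⟨i, rfl⟩ := hv
    simp [he₂]
  · rw [Finset.card_image_of_injective _ (he₁ c)]
    rw [Finset.card_univ, Fintype.card_fin]; exact le_rfl

lemma sum_fiber (he₁ : ∀ c, Function.Injective (e c)) (he₂ : ∀ c i, p (e c i) = c) (f : V → ℝ) :
    ∑ v : V, f v = ∑ c : C, ∑ i : Fin (fiberCard p c), f (e c i) := by
  rw [← Finset.sum_fiberwise Finset.univ p f]
  refine Finset.sum_congr rfl fun c _ => ?_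
  rw [fiber_eq_image p e he₁ he₂ c,
    Finset.sum_image (fun a _ b _ h => he₁ c h)]

lemma chi_apply_e (he₁ : ∀ c, Function.Injective (e c)) (c : C) (j : ℕ)
    (i : Fin (fiberCard p c)) :
    chi p e c j (e c i) = if j - 1 = (i : ℕ) then 1 else 0 := by
  by_cases hj : j - 1 < fiberCard p c
  · simp only [chi, dif_pos hj]
    by_cases h : j - 1 = (i : ℕ)
    · rw [if_pos h, if_pos]
      exact congrArg (e c) (Fin.ext h.symm)
    · rw [if_neg h, if_neg]
      intro hh
      exact h (by simpa [Fin.ext_iff] using (he₁ c hh).symm)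
  · simp only [chi, dif_neg hj]
    rw [if_neg]
    intro h
    exact hj (h ▸ i.isLt)

lemma chi_eq_zero (he₂ : ∀ c i, p (e c i) = c) {c : C} {v : V} (hv : p v ≠ c) (j : ℕ) :
    chi p e c j v = 0 := by
  unfold chi
  split
  · rw [if_neg]
    rintro rfl
    exact hv (he₂ c _)
  · rfl

lemma eta_eq_zero (he₂ : ∀ c i, p (e c i) = c) {c : C} {v : V} (hv : p v ≠ c) (k : ℕ) :
    eta p e c k v = 0 := by
  unfold eta
  rw [chi_eq_zero p e he₂ hv]
  rw [Finset.sum_congr rfl fun j _ => chi_eq_zero p e he₂ hv j]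
  simp

lemma chi_inner (he₁ : ∀ c, Function.Injective (e c)) {c : C} {j j' : ℕ}
    (hj1 : 1 ≤ j) (hj2 : j ≤ fiberCard p c) (hj'1 : 1 ≤ j') (hj'2 : j' ≤ fiberCard p c) :
    ∑ v : V, chi p e c j v * chi p e c j' v = if j = j' then 1 else 0 := by
  have hj : j - 1 < fiberCard p c := by omega
  have hj' : j' - 1 < fiberCard p c := by omega
  simp only [chi, dif_pos hj, dif_pos hj', ite_mul, one_mul, zero_mul]
  rw [Finset.sum_ite_eq' Finset.univ (e c ⟨j - 1, hj⟩)
    (fun v => if v = e c ⟨j' - 1, hj'⟩ then (1:ℝ) else 0)]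
  simp only [Finset.mem_univ, if_pos]
  by_cases h : j = j'
  · subst h; simp
  · rw [if_neg, if_neg h]
    intro hh
    have := he₁ c hh
    simp only [Fin.mk.injEq] at this
    omega

lemma lift_chi_inner (he₂ : ∀ c i, p (e c i) = c) (g : C → ℝ) {c : C} {j : ℕ}
    (hj1 : 1 ≤ j) (hj2 : j ≤ fiberCard p c) :
    ∑ v : V, lift p g v * chi p e c j v = g c / Real.sqrt (fiberCard p c) := by
  have hj : j - 1 < fiberCard p c := by omega
  simp only [chi, dif_pos hj, mul_ite, mul_one, mul_zero]
  rw [Finset.sum_ite_eq' Finset.univ (e c ⟨j - 1, hj⟩) (lift p g)]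
  simp [lift, he₂]

end Aux

section Aux2
set_option linter.unusedSectionVars false

variable {V C : Type*} [Fintype V] [Fintype C] [DecidableEq V] [DecidableEq C]
  (p : V → C) (e : ∀ c : C, Fin (fiberCard p c) → V)

lemma lift_lift (hp : Function.Surjective p) (he₁ : ∀ c, Function.Injective (e c))
    (he₂ : ∀ c i, p (e c i) = c) (g g' : C → ℝ) :
    ∑ v : V, lift p g v * lift p g' v = ∑ c : C, g c * g' c := by
  rw [sum_fiber p e he₁ he₂]
  refine Finset.sum_congr rfl fun c _ => ?_
  have hn : 0 < fiberCard p c := by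
    obtain ⟨v, hv⟩ := hp c
    exact Finset.card_pos.mpr ⟨v, by simp [hv]⟩
  have hn' : (0:ℝ) < (fiberCard p c : ℝ) := by exact_mod_cast hn
  simp only [lift, he₂]
  rw [Finset.sum_const, Finset.card_univ, Fintype.card_fin, nsmul_eq_mul,
    div_mul_div_comm, Real.mul_self_sqrt hn'.le]
  field_simp

lemma lift_eta_inner (he₂ : ∀ c i, p (e c i) = c) (g : C → ℝ) {c : C} {k : ℕ}
    (hk1 : 2 ≤ k) (hk2 : k ≤ fiberCard p c) :
    ∑ v : V, lift p g v * eta p e c k v = 0 := by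
  set n := fiberCard p c with hn
  set a := Real.sqrt (((n:ℝ) - k + 1)/((n:ℝ) - k + 2)) with ha
  have pt : ∀ v, lift p g v * eta p e c k v =
      a * (lift p g v * chi p e c (k-1) v) -
      (a * (1/((n:ℝ) - k + 1))) * ∑ j ∈ Finset.Icc k n, lift p g v * chi p e c j v := by
    intro v
    simp only [eta]
    rw [← Finset.mul_sum]
    ring
  rw [Finset.sum_congr rfl fun v _ => pt v, Finset.sum_sub_distrib,
    ← Finset.mul_sum, ← Finset.mul_sum, Finset.sum_comm]
  rw [lift_chi_inner p e he₂ g (by omega) (by omega)]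
  rw [Finset.sum_congr rfl fun j hj => lift_chi_inner p e he₂ g
    (by have := (Finset.mem_Icc.mp hj).1; omega) (Finset.mem_Icc.mp hj).2]
  rw [Finset.sum_const, Nat.card_Icc, nsmul_eq_mul]
  have hm : ((n + 1 - k : ℕ) : ℝ) = (n:ℝ) - k + 1 := by
    rw [Nat.cast_sub (by omega)]
    push_cast
    ring
  have hm0 : ((n:ℝ) - k + 1) ≠ 0 := by
    rw [← hm]
    exact_mod_cast (by omega : (n + 1 - k : ℕ) ≠ 0)
  rw [hm]
  have key : (1/((n:ℝ) - k + 1)) * (((n:ℝ) - k + 1) * (g c / Real.sqrt (fiberCard p c)))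
      = g c / Real.sqrt (fiberCard p c) := by
    field_simp
  rw [mul_assoc, key, sub_self]

lemma eta_eta_inner (he₁ : ∀ c, Function.Injective (e c)) {c : C} {k k' : ℕ}
    (hk1 : 2 ≤ k) (hkk' : k ≤ k') (hk'2 : k' ≤ fiberCard p c) :
    ∑ v : V, eta p e c k v * eta p e c k' v = if k = k' then 1 else 0 := by
  set n := fiberCard p c with hn
  set a := Real.sqrt (((n:ℝ) - k + 1)/((n:ℝ) - k + 2)) with ha
  set a' := Real.sqrt (((n:ℝ) - k' + 1)/((n:ℝ) - k' + 2)) with ha'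
  set b := 1/((n:ℝ) - k + 1) with hb
  set b' := 1/((n:ℝ) - k' + 1) with hb'
  have pt : ∀ v, eta p e c k v * eta p e c k' v =
      a*a' * (chi p e c (k-1) v * chi p e c (k'-1) v)
      - (a*a'*b') * (∑ j' ∈ Finset.Icc k' n, chi p e c (k-1) v * chi p e c j' v)
      - (a*a'*b) * (∑ j ∈ Finset.Icc k n, chi p e c j v * chi p e c (k'-1) v)
      + (a*a'*b*b') * (∑ j ∈ Finset.Icc k n, ∑ j' ∈ Finset.Icc k' n,
          chi p e c j v * chi p e c j' v) := by
    intro v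
    simp only [eta]
    rw [← Finset.sum_mul_sum, ← Finset.mul_sum, ← Finset.sum_mul]
    ring
  have E1 : ∑ v : V, chi p e c (k-1) v * chi p e c (k'-1) v
      = if k = k' then 1 else 0 := by
    rw [chi_inner p e he₁ (by omega) (by omega) (by omega) (by omega)]
    by_cases h : k = k'
    · rw [if_pos (by omega : k - 1 = k' - 1), if_pos h]
    · rw [if_neg (by omega : ¬ (k - 1 = k' - 1)), if_neg h]
  have E2 : ∑ v : V, ∑ j' ∈ Finset.Icc k' n, chi p e c (k-1) v * chi p e c j' v = 0 := by
    rw [Finset.sum_comm]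
    apply Finset.sum_eq_zero
    intro j' hj'
    have hj'm := Finset.mem_Icc.mp hj'
    rw [chi_inner p e he₁ (by omega) (by omega) (by omega) hj'm.2]
    exact if_neg (by omega)
  have E3 : ∑ v : V, ∑ j ∈ Finset.Icc k n, chi p e c j v * chi p e c (k'-1) v
      = if k < k' then 1 else 0 := by
    rw [Finset.sum_comm]
    rw [Finset.sum_congr rfl fun j hj => chi_inner p e he₁
      (by have := (Finset.mem_Icc.mp hj).1; omega) (Finset.mem_Icc.mp hj).2
      (by omega) (by omega)]
    rw [Finset.sum_ite_eq' (Finset.Icc k n) (k'-1) (fun _ => (1:ℝ))]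
    by_cases h : k < k'
    · rw [if_pos (by simp only [Finset.mem_Icc]; omega), if_pos h]
    · rw [if_neg (by simp only [Finset.mem_Icc]; omega), if_neg h]
  have E4 : ∑ v : V, ∑ j ∈ Finset.Icc k n, ∑ j' ∈ Finset.Icc k' n,
      chi p e c j v * chi p e c j' v = ((n + 1 - k' : ℕ) : ℝ) := by
    rw [Finset.sum_comm]
    rw [Finset.sum_congr rfl fun j hj => Finset.sum_comm]
    rw [Finset.sum_congr rfl fun j hj => Finset.sum_congr rfl fun j' hj' =>
      chi_inner p e he₁ (by have := (Finset.mem_Icc.mp hj).1; omega) (Finset.mem_Icc.mp hj).2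
        (by have := (Finset.mem_Icc.mp hj').1; omega) (Finset.mem_Icc.mp hj').2]
    rw [Finset.sum_congr rfl fun j hj =>
      Finset.sum_ite_eq (Finset.Icc k' n) j (fun _ => (1:ℝ))]
    rw [Finset.sum_ite_mem]
    have hint : Finset.Icc k n ∩ Finset.Icc k' n = Finset.Icc k' n := by
      ext x
      simp only [Finset.mem_inter, Finset.mem_Icc]
      omega
    rw [hint, Finset.sum_const, Nat.card_Icc, nsmul_eq_mul, mul_one]
  rw [Finset.sum_congr rfl fun v _ => pt v]
  rw [Finset.sum_add_distrib, Finset.sum_sub_distrib, Finset.sum_sub_distrib,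
    ← Finset.mul_sum, ← Finset.mul_sum, ← Finset.mul_sum, ← Finset.mul_sum,
    E1, E2, E3, E4]
  rw [mul_zero, sub_zero]
  have hm : ((n + 1 - k' : ℕ) : ℝ) = (n:ℝ) - k' + 1 := by
    rw [Nat.cast_sub (by omega)]; push_cast; ring
  have hkn : (k:ℝ) ≤ (n:ℝ) := by exact_mod_cast hkk'.trans hk'2
  have hk'n : (k':ℝ) ≤ (n:ℝ) := by exact_mod_cast hk'2
  have hm0 : ((n:ℝ) - k + 1) ≠ 0 := by linarith
  have hm0' : ((n:ℝ) - k' + 1) ≠ 0 := by linarith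
  have hm2 : ((n:ℝ) - k + 2) ≠ 0 := by linarith
  rw [hm]
  by_cases hke : k = k'
  · subst hke
    rw [if_pos rfl, if_neg (lt_irrefl k), mul_zero, sub_zero]
    have haa' : a' = a := by rw [ha, ha']
    have hbb' : b' = b := by rw [hb, hb']
    rw [haa', hbb', hb]
    have haa : a * a = ((n:ℝ) - k + 1) / ((n:ℝ) - k + 2) := by
      rw [ha, Real.mul_self_sqrt (div_nonneg (by linarith) (by linarith))]
    rw [mul_one, haa]
    field_simp
    ring
  · rw [if_neg hke, if_pos (lt_of_le_of_ne hkk' hke), mul_zero, zero_sub, mul_one]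
    rw [hb, hb']
    field_simp
    ring

end Aux2

section LinAlg
set_option linter.unusedSectionVars false

variable {V : Type*} [Fintype V] [DecidableEq V]

lemma orthonormal_linearIndependent {ι : Type*} [Fintype ι] [DecidableEq ι] (F : ι → V → ℝ)
    (h : ∀ i j, ∑ v : V, F i v * F j v = if i = j then 1 else 0) :
    LinearIndependent ℝ F := by
  rw [Fintype.linearIndependent_iff]
  intro g hg j
  have h0 : ∑ v : V, (∑ i : ι, g i • F i) v * F j v = 0 := by
    rw [hg]
    simp
  calc g j = ∑ i : ι, g i * (if i = j then 1 else 0) := by simp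
    _ = ∑ i : ι, g i * ∑ v : V, F i v * F j v := by
        exact Finset.sum_congr rfl fun i _ => by rw [h i j]
    _ = ∑ v : V, (∑ i : ι, g i • F i) v * F j v := by
        simp only [Finset.sum_apply, Pi.smul_apply, smul_eq_mul, Finset.sum_mul, Finset.mul_sum]
        rw [Finset.sum_comm]
        exact Finset.sum_congr rfl fun v _ => Finset.sum_congr rfl fun i _ => by ring
    _ = 0 := h0

end LinAlg

instance instFintypeHaarIdx (n : ℕ) : Fintype {k : ℕ // 2 ≤ k ∧ k ≤ n} :=
  Fintype.ofFinset (Finset.Icc 2 n) (fun k => by simp only [Finset.mem_Icc]; exact Iff.rfl)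

lemma card_haarIdx (n : ℕ) : Fintype.card {k : ℕ // 2 ≤ k ∧ k ≤ n} = n - 1 := by
  rw [Fintype.card_of_subtype (Finset.Icc 2 n) (fun k => by simp [Finset.mem_Icc])]
  rw [Nat.card_Icc]
  omega

/-- Step 1 of the Haar basis construction: if `{ψ_ℓ}` is an orthonormal basis of `ℓ²(C)`,
then the combined family `{Tψ_ℓ} ∪ {η_{c,k} : c ∈ C, 2 ≤ k ≤ k_c}` is an orthonormal basis
of `ℓ²(V)` (it is orthonormal and spans all of `V → ℝ`). -/
theorem combined_family_orthonormal_basis {V C : Type*} [Fintype V] [Fintype C]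
    [Nonempty V] [Nonempty C] [DecidableEq V] [DecidableEq C]
    (p : V → C) (hp : Function.Surjective p)
    (e : ∀ c : C, Fin (fiberCard p c) → V)
    (he₁ : ∀ c, Function.Injective (e c)) (he₂ : ∀ c i, p (e c i) = c)
    (ψ : Fin (Fintype.card C) → C → ℝ)
    (hψ₁ : ∀ i j, ∑ c : C, ψ i c * ψ j c = if i = j then 1 else 0)
    (hψ₂ : Submodule.span ℝ (Set.range ψ) = (⊤ : Submodule ℝ (C → ℝ))) :
    (∀ i j : Fin (Fintype.card C) ⊕ (Σ c : C, {k : ℕ // 2 ≤ k ∧ k ≤ fiberCard p c}),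
      ∑ v : V,
          Sum.elim (fun ℓ => lift p (ψ ℓ))
              (fun x : Σ c : C, {k : ℕ // 2 ≤ k ∧ k ≤ fiberCard p c} =>
                eta p e x.1 x.2.1) i v *
            Sum.elim (fun ℓ => lift p (ψ ℓ))
              (fun x : Σ c : C, {k : ℕ // 2 ≤ k ∧ k ≤ fiberCard p c} =>
                eta p e x.1 x.2.1) j v =
        if i = j then 1 else 0) ∧
    Submodule.span ℝ
        (Set.range (Sum.elim (fun ℓ => lift p (ψ ℓ))
          (fun x : Σ c : C, {k : ℕ // 2 ≤ k ∧ k ≤ fiberCard p c} =>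
            eta p e x.1 x.2.1))) =
      (⊤ : Submodule ℝ (V → ℝ)) := by
  set F := Sum.elim (fun ℓ => lift p (ψ ℓ))
      (fun x : Σ c : C, {k : ℕ // 2 ≤ k ∧ k ≤ fiberCard p c} => eta p e x.1 x.2.1) with hF
  have horth : ∀ i j, ∑ v : V, F i v * F j v = if i = j then 1 else 0 := by
    rintro (ℓ | ⟨c, k, hk⟩) (ℓ' | ⟨c', k', hk'⟩)
    · simp only [hF, Sum.elim_inl]
      rw [lift_lift p e hp he₁ he₂, hψ₁]
      by_cases h : ℓ = ℓ'
      · rw [if_pos h, if_pos (by rw [h])]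
      · rw [if_neg h, if_neg (by simp [h])]
    · simp only [hF, Sum.elim_inl, Sum.elim_inr]
      rw [lift_eta_inner p e he₂ (ψ ℓ) hk'.1 hk'.2, if_neg (by simp)]
    · simp only [hF, Sum.elim_inl, Sum.elim_inr]
      rw [Finset.sum_congr rfl fun v _ => mul_comm (eta p e c k v) (lift p (ψ ℓ') v),
        lift_eta_inner p e he₂ (ψ ℓ') hk.1 hk.2, if_neg (by simp)]
    · simp only [hF, Sum.elim_inr]
      by_cases hcc : c = c'
      · subst hcc
        have hiff : (Sum.inr ⟨c, ⟨k, hk⟩⟩ :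
            Fin (Fintype.card C) ⊕ (Σ c : C, {k : ℕ // 2 ≤ k ∧ k ≤ fiberCard p c})) =
            Sum.inr ⟨c, ⟨k', hk'⟩⟩ ↔ k = k' := by
          simp
        rcases le_or_gt k k' with hkk | hkk
        · rw [eta_eta_inner p e he₁ hk.1 hkk hk'.2]
          by_cases h : k = k'
          · rw [if_pos h, if_pos (hiff.mpr h)]
          · rw [if_neg h, if_neg (fun hh => h (hiff.mp hh))]
        · rw [Finset.sum_congr rfl fun v _ => mul_comm _ _,
            eta_eta_inner p e he₁ hk'.1 hkk.le hk.2]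
          rw [if_neg (show ¬ k' = k by omega), if_neg fun hh => absurd (hiff.mp hh) (by omega)]
      · rw [if_neg (by
          intro hh
          apply hcc
          have := congrArg (fun z =>
            Sum.elim (fun _ => c) (fun x => x.1) z) hh
          simpa using this)]
        apply Finset.sum_eq_zero
        intro v _
        by_cases hv : p v = c
        · rw [eta_eq_zero p e he₂ (by rw [hv]; exact hcc) k', mul_zero]
        · rw [eta_eq_zero p e he₂ hv k, zero_mul]
  refine ⟨horth, ?_⟩
  haveI : Nonempty (Fin (Fintype.card C) ⊕ Σ c : C, {k : ℕ // 2 ≤ k ∧ k ≤ fiberCard p c}) :=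
    ⟨Sum.inl ⟨0, Fintype.card_pos⟩⟩
  have hli : LinearIndependent ℝ F := orthonormal_linearIndependent F horth
  have hcard : Fintype.card
      (Fin (Fintype.card C) ⊕ Σ c : C, {k : ℕ // 2 ≤ k ∧ k ≤ fiberCard p c})
      = Fintype.card V := by
    rw [Fintype.card_sum, Fintype.card_fin, Fintype.card_sigma]
    have h1 : ∀ c : C, 1 ≤ fiberCard p c := fun c => by
      obtain ⟨v, hv⟩ := hp c
      exact Finset.card_pos.mpr ⟨v, by simp [hv]⟩
    have hV : Fintype.card V = ∑ c : C, fiberCard p c := by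
      rw [← Finset.card_univ, Finset.card_eq_sum_card_fiberwise
        (fun v _ => Finset.mem_univ (p v))]
      rfl
    rw [Finset.sum_congr rfl fun c _ => card_haarIdx (fiberCard p c), hV]
    rw [Fintype.card, Finset.card_eq_sum_ones, ← Finset.sum_add_distrib]
    exact Finset.sum_congr rfl fun c _ => by have := h1 c; omega
  exact hli.span_eq_top_of_card_eq_finrank
    (by rw [hcard, Module.finrank_fintype_fun_eq_card])
end

section
/- (Zero loss of HaarPooling on cluster-constant signals.) Let {ψ_ℓ}_{ℓ=1}^{|C|} be any orthonormal basis of ℓ²(C), and suppose f : V → ℝ is constant on each fiber of p (f(u) = f(v) whenever p(u) = p(v)). Then all high-frequency Haar coefficients vanish, ⟨f, η_{c,k}⟩ = 0 for all c ∈ C and 2 ≤ k ≤ k_c, and the compressive Haar transform preserves the norm: ∑_{ℓ=1}^{|C|} ⟨f, Tψ_ℓ⟩² = ∑_{v ∈ V} f(v)². -/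
/-- Zero loss of HaarPooling on cluster-constant signals: if `f` is constant on each fiber
of `p`, then all high-frequency Haar coefficients `⟨f, η_{c,k}⟩` vanish, and the
compressive Haar transform preserves the norm of `f`. -/
theorem haar_pooling_zero_loss {V C : Type*} [Fintype V] [Fintype C]
    [Nonempty V] [Nonempty C] [DecidableEq V] [DecidableEq C]
    (p : V → C) (hp : Function.Surjective p)
    (e : ∀ c : C, Fin (fiberCard p c) → V)
    (he₁ : ∀ c, Function.Injective (e c)) (he₂ : ∀ c i, p (e c i) = c)
    (ψ : Fin (Fintype.card C) → C → ℝ)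
    (hψ₁ : ∀ i j, ∑ c : C, ψ i c * ψ j c = if i = j then 1 else 0)
    (hψ₂ : Submodule.span ℝ (Set.range ψ) = (⊤ : Submodule ℝ (C → ℝ)))
    (f : V → ℝ) (hf : ∀ u v : V, p u = p v → f u = f v) :
    (∀ c : C, ∀ k : ℕ, 2 ≤ k → k ≤ fiberCard p c → ∑ v : V, f v * eta p e c k v = 0) ∧
    ∑ ℓ : Fin (Fintype.card C), (∑ v : V, f v * lift p (ψ ℓ) v) ^ 2 =
      ∑ v : V, f v ^ 2 := by

  have hpos : ∀ c, 0 < fiberCard p c := by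
    intro c
    obtain ⟨v, hv⟩ := hp c
    exact Finset.card_pos.mpr ⟨v, by simp [hv]⟩
  set a : C → ℝ := fun c => f (e c ⟨0, hpos c⟩) with ha
  have hfa : ∀ c, ∀ v, p v = c → f v = a c := fun c v hv => hf _ _ (by rw [hv, he₂])
  constructor
  · intro c k hk2 hkm
    set m := fiberCard p c with hm
    set s := Real.sqrt (((m : ℝ) - k + 1) / ((m : ℝ) - k + 2)) with hs
    set d : ℝ := (m : ℝ) - k + 1 with hdd
    have hchi : ∀ j, 1 ≤ j → j ≤ m → ∑ v : V, f v * chi p e c j v = a c := by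
      intro j h1 h2
      have hj : j - 1 < m := by omega
      have : ∑ v : V, f v * chi p e c j v = f (e c ⟨j - 1, hj⟩) := by
        simp [chi, hj, mul_ite]
        exact dif_pos hj
      rw [this]
      exact hfa c _ (he₂ c _)
    have hd : d ≠ 0 := by
      have : (k : ℝ) ≤ (m : ℝ) := by exact_mod_cast hkm
      rw [hdd]; nlinarith
    have h1 : ∀ v : V, f v * eta p e c k v =
        s * (f v * chi p e c (k - 1) v) -
          ∑ j ∈ Finset.Icc k m, s * (1 / d) * (f v * chi p e c j v) := by
      intro v
      have h2 : ∑ j ∈ Finset.Icc k m, s * (1 / d) * (f v * chi p e c j v) =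
          s * (1 / d) * (f v * ∑ j ∈ Finset.Icc k m, chi p e c j v) := by
        simp only [Finset.mul_sum]
      rw [h2]
      simp only [eta, ← hs, ← hdd]
      ring
    calc ∑ v : V, f v * eta p e c k v
        = ∑ v : V, (s * (f v * chi p e c (k - 1) v) -
            ∑ j ∈ Finset.Icc k m, s * (1 / d) * (f v * chi p e c j v)) :=
          Finset.sum_congr rfl fun v _ => h1 v
      _ = s * (∑ v : V, f v * chi p e c (k - 1) v) -
            ∑ j ∈ Finset.Icc k m, s * (1 / d) * (∑ v : V, f v * chi p e c j v) := by
          rw [Finset.sum_sub_distrib, ← Finset.mul_sum, Finset.sum_comm]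
          congr 1
          exact Finset.sum_congr rfl fun j _ => (Finset.mul_sum _ _ _).symm
      _ = s * a c - ∑ j ∈ Finset.Icc k m, s * (1 / d) * a c := by
          rw [hchi (k - 1) (by omega) (by omega)]
          congr 1
          refine Finset.sum_congr rfl fun j hj => ?_
          rw [Finset.mem_Icc] at hj
          rw [hchi j (by omega) hj.2]
      _ = s * a c - ((m + 1 - k : ℕ) : ℝ) * (s * (1 / d) * a c) := by
          rw [Finset.sum_const, Nat.card_Icc, nsmul_eq_mul]
      _ = s * a c - d * (s * (1 / d) * a c) := by
          congr 1
          have : ((m + 1 - k : ℕ) : ℝ) = d := by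
            rw [hdd, Nat.cast_sub (by omega)]
            push_cast; ring
          rw [this]
      _ = 0 := by field_simp; ring
  · set F : C → ℝ := fun c => a c * Real.sqrt (fiberCard p c) with hF
    have hsplit : ∀ g : V → ℝ, ∑ v : V, g v =
        ∑ c : C, ∑ v ∈ Finset.univ.filter (fun v => p v = c), g v :=
      fun g => (Finset.sum_fiberwise_of_maps_to (fun v _ => Finset.mem_univ _) g).symm
    have hsq : ∀ c, Real.sqrt (fiberCard p c) * Real.sqrt (fiberCard p c)
        = (fiberCard p c : ℝ) := fun c => Real.mul_self_sqrt (by positivity)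
    have hsne : ∀ c, Real.sqrt (fiberCard p c) ≠ 0 := fun c => by
      have := hpos c
      positivity
    have hlift : ∀ ℓ, ∑ v : V, f v * lift p (ψ ℓ) v = ∑ c : C, F c * ψ ℓ c := by
      intro ℓ
      rw [hsplit]
      refine Finset.sum_congr rfl fun c _ => ?_
      have hconst : ∀ v ∈ Finset.univ.filter (fun v => p v = c),
          f v * lift p (ψ ℓ) v = a c * (ψ ℓ c / Real.sqrt (fiberCard p c)) := by
        intro v hv
        rw [Finset.mem_filter] at hv
        rw [lift, hv.2, hfa c v hv.2]
      rw [Finset.sum_congr rfl hconst, Finset.sum_const, nsmul_eq_mul]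
      show ((fiberCard p c : ℝ)) * (a c * (ψ ℓ c / Real.sqrt (fiberCard p c))) = F c * ψ ℓ c
      rw [hF]
      have : ((fiberCard p c : ℝ)) * (a c * (ψ ℓ c / Real.sqrt (fiberCard p c))) =
          ((fiberCard p c : ℝ) / Real.sqrt (fiberCard p c)) * (a c * ψ ℓ c) := by ring
      rw [this, Real.div_sqrt]
      ring
    have hnormV : ∑ v : V, f v ^ 2 = ∑ c : C, F c ^ 2 := by
      rw [hsplit]
      refine Finset.sum_congr rfl fun c _ => ?_
      have hconst : ∀ v ∈ Finset.univ.filter (fun v => p v = c),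
          f v ^ 2 = a c ^ 2 := by
        intro v hv
        rw [Finset.mem_filter] at hv
        rw [hfa c v hv.2]
      rw [Finset.sum_congr rfl hconst, Finset.sum_const, nsmul_eq_mul]
      show ((fiberCard p c : ℝ)) * _ = _
      rw [hF]
      simp only []
      rw [mul_pow, sq (Real.sqrt _), hsq c]
      ring
    have hFmem : F ∈ Submodule.span ℝ (Set.range ψ) := hψ₂ ▸ Submodule.mem_top
    obtain ⟨b, hb⟩ := (Submodule.mem_span_range_iff_exists_fun ℝ).mp hFmem
    have hFc : ∀ c, F c = ∑ ℓ, b ℓ * ψ ℓ c := by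
      intro c
      rw [← hb]
      simp [Finset.sum_apply]
    have hcoef : ∀ j, ∑ c : C, F c * ψ j c = b j := by
      intro j
      calc ∑ c : C, F c * ψ j c = ∑ c : C, ∑ ℓ, b ℓ * (ψ ℓ c * ψ j c) := by
            refine Finset.sum_congr rfl fun c _ => ?_
            rw [hFc c, Finset.sum_mul]
            exact Finset.sum_congr rfl fun ℓ _ => by ring
        _ = ∑ ℓ, b ℓ * ∑ c : C, ψ ℓ c * ψ j c := by
            rw [Finset.sum_comm]
            exact Finset.sum_congr rfl fun ℓ _ => (Finset.mul_sum _ _ _).symm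
        _ = b j := by simp [hψ₁]
    have hnormC : ∑ c : C, F c ^ 2 = ∑ ℓ, b ℓ ^ 2 := by
      calc ∑ c : C, F c ^ 2 = ∑ c : C, ∑ ℓ, b ℓ * (F c * ψ ℓ c) := by
            refine Finset.sum_congr rfl fun c _ => ?_
            rw [sq, hFc c, Finset.mul_sum]
            exact Finset.sum_congr rfl fun ℓ _ => by ring
        _ = ∑ ℓ, b ℓ * ∑ c : C, F c * ψ ℓ c := by
            rw [Finset.sum_comm]
            exact Finset.sum_congr rfl fun ℓ _ => (Finset.mul_sum _ _ _).symm
        _ = ∑ ℓ, b ℓ ^ 2 := Finset.sum_congr rfl fun ℓ _ => by rw [hcoef ℓ]; ring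
    calc ∑ ℓ : Fin (Fintype.card C), (∑ v : V, f v * lift p (ψ ℓ) v) ^ 2
        = ∑ ℓ, b ℓ ^ 2 := Finset.sum_congr rfl fun ℓ _ => by rw [hlift ℓ, hcoef ℓ]
      _ = ∑ c : C, F c ^ 2 := hnormC.symm
      _ = ∑ v : V, f v ^ 2 := hnormV.symm
end
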